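/- For n ≥ 2 and each h with 2 ≤ h ≤ n+1, the leading monomial of F_h = det W^h (the n×n minor of the generic (n+1)×n matrix W deleting row h), with respect to the graded reverse lexicographic order on the ordering w_{1,1} < w_{1,2} < ⋯ < w_{n+1,n}, is y_h := Π_{i=1}^{h-1} w_{i,n+1-i} · Π_{i=h+1}^{n+1} w_{i,n+2-i}. -/

import Mathlib

open MvPolynomial Matrix

namespace NestedHilbertStmt13

variable {n : ℕ}

/-- The ordering of the variables `w_{1,1} < w_{1,2} < ⋯ < w_{n+1,n}` of `A = k[w_{i,j}]`:
lexicographic on the index pairs `(i,j)`. -/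
def varLT (x y : Fin (n + 1) × Fin n) : Prop :=
  x.1 < y.1 ∨ (x.1 = y.1 ∧ x.2 < y.2)

/-- The total degree of an exponent vector. -/
def wdeg (d : Fin (n + 1) × Fin n →₀ ℕ) : ℕ := d.sum fun _ e => e

/-- The graded reverse lexicographic order on exponent vectors with respect to `varLT`. -/
def GrevlexLT (d e : Fin (n + 1) × Fin n →₀ ℕ) : Prop :=
  wdeg d < wdeg e ∨
    (wdeg d = wdeg e ∧ ∃ x, e x < d x ∧ ∀ y, varLT y x → d y = e y)

/-- The exponent vector of the monomial of `det W^h` attached to a permutation `σ`. -/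
noncomputable def mPerm (h : Fin (n + 1)) (σ : Equiv.Perm (Fin n)) : Fin (n + 1) × Fin n →₀ ℕ :=
  ∑ j : Fin n, Finsupp.single (h.succAbove (σ j), j) 1

lemma mPerm_apply (h : Fin (n + 1)) (σ : Equiv.Perm (Fin n)) (r : Fin (n + 1)) (c : Fin n) :
    mPerm h σ (r, c) = if h.succAbove (σ c) = r then 1 else 0 := by
  classical
  rw [mPerm, Finsupp.finset_sum_apply]
  rw [Finset.sum_eq_single c]
  · simp [Finsupp.single_apply, Prod.ext_iff]
  · intro j _ hj
    simp [Finsupp.single_apply, Prod.ext_iff, hj]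
  · simp

lemma mPerm_injective (h : Fin (n + 1)) : Function.Injective (mPerm (n := n) h) := by
  intro σ τ he
  ext c
  have h1 : mPerm h σ (h.succAbove (σ c), c) = mPerm h τ (h.succAbove (σ c), c) := by rw [he]
  rw [mPerm_apply, mPerm_apply, if_pos rfl] at h1
  split_ifs at h1 with h2
  exact congrArg Fin.val (Fin.succAbove_right_injective h2).symm

lemma wdeg_mPerm (h : Fin (n + 1)) (σ : Equiv.Perm (Fin n)) : wdeg (mPerm h σ) = n := by
  classical
  rw [wdeg, mPerm, ← Finsupp.sum_finsetSum_index (fun _ => rfl) (fun _ _ _ => rfl)]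
  simp

lemma coeff_det (k : Type*) [CommRing k] (h : Fin (n + 1)) (d : Fin (n + 1) × Fin n →₀ ℕ) :
    MvPolynomial.coeff d
      (Matrix.det ((Matrix.of fun (i : Fin (n + 1)) (j : Fin n) =>
        (X (i, j) : MvPolynomial (Fin (n + 1) × Fin n) k)).submatrix h.succAbove id)) =
    ∑ σ : Equiv.Perm (Fin n),
      if mPerm h σ = d then ((Equiv.Perm.sign σ : ℤ) : k) else 0 := by
  classical
  rw [Matrix.det_apply, MvPolynomial.coeff_sum]
  refine Finset.sum_congr rfl fun σ _ => ?_
  have hprod : (∏ i : Fin n,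
      ((Matrix.of fun (i : Fin (n + 1)) (j : Fin n) =>
        (X (i, j) : MvPolynomial (Fin (n + 1) × Fin n) k)).submatrix h.succAbove id) (σ i) i)
      = monomial (mPerm h σ) 1 := by
    rw [mPerm, monomial_sum_one]
    refine Finset.prod_congr rfl fun i _ => ?_
    simp only [Matrix.submatrix_apply, Matrix.of_apply, id_eq]
    rfl
  rw [hprod, MvPolynomial.coeff_smul, MvPolynomial.coeff_monomial]
  split_ifs <;> simp [Units.smul_def]

lemma coeff_det_mPerm (k : Type*) [CommRing k] (h : Fin (n + 1)) (τ : Equiv.Perm (Fin n)) :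
    MvPolynomial.coeff (mPerm h τ)
      (Matrix.det ((Matrix.of fun (i : Fin (n + 1)) (j : Fin n) =>
        (X (i, j) : MvPolynomial (Fin (n + 1) × Fin n) k)).submatrix h.succAbove id)) =
    ((Equiv.Perm.sign τ : ℤ) : k) := by
  classical
  rw [coeff_det, Finset.sum_eq_single τ]
  · rw [if_pos rfl]
  · intro σ _ hστ
    exact if_neg fun he => hστ (mPerm_injective h he)
  · simp

lemma grevlex_lt (h : Fin (n + 1)) (σ : Equiv.Perm (Fin n)) (hσ : σ ≠ Fin.revPerm) :
    GrevlexLT (mPerm h σ) (mPerm h Fin.revPerm) := by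
  classical
  right
  refine ⟨by rw [wdeg_mPerm, wdeg_mPerm], ?_⟩
  have hex : ∃ i : Fin n, σ i.rev ≠ i := by
    by_contra hc
    push_neg at hc
    apply hσ
    ext j
    have h1 := hc j.rev
    rw [Fin.rev_rev] at h1
    simp only [Fin.revPerm_apply]
    rw [h1]
  set S : Finset (Fin n) := Finset.univ.filter (fun i => σ i.rev ≠ i) with hSdef
  have hS : S.Nonempty := ⟨hex.choose, by simp [hSdef, hex.choose_spec]⟩
  set i0 := S.min' hS with hi0def
  have hi0 : σ i0.rev ≠ i0 := by
    have := S.min'_mem hS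
    simpa [hSdef] using this
  have hmin : ∀ i : Fin n, i < i0 → σ i.rev = i := by
    intro i hi
    by_contra hne
    exact absurd (S.min'_le i (by simp [hSdef, hne])) (not_le.2 hi)
  set j0 := σ.symm i0 with hj0def
  have hσj0 : σ j0 = i0 := σ.apply_symm_apply i0
  have hj0 : j0 ≠ i0.rev := by
    intro he
    exact hi0 (by rw [← he, hσj0])
  have hj0lt : j0 < i0.rev := by
    rcases lt_or_ge j0 i0.rev with h1 | h1
    · exact h1
    · exfalso
      have h2 : i0.rev < j0 := lt_of_le_of_ne h1 (Ne.symm hj0)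
      have h3 : j0.rev < i0 := by
        rw [Fin.lt_def] at h2 ⊢
        rw [Fin.val_rev] at h2 ⊢
        omega
      have h4 := hmin j0.rev h3
      rw [Fin.rev_rev, hσj0] at h4
      rw [← h4] at h3
      exact lt_irrefl _ h3
  refine ⟨(h.succAbove i0, j0), ?_, ?_⟩
  · rw [mPerm_apply, mPerm_apply, hσj0, if_pos rfl, if_neg]
    · norm_num
    · intro he
      have h1 : Fin.revPerm j0 = i0 := Fin.succAbove_right_injective he
      apply hj0
      rw [← h1]
      simp
  · rintro ⟨r, c⟩ hy
    rw [mPerm_apply, mPerm_apply]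
    rcases hy with hr | ⟨hreq, hc⟩
    · simp only at hr
      have key : h.succAbove (σ c) = r ↔ h.succAbove (Fin.revPerm c) = r := by
        constructor
        · intro he
          have hlt : σ c < i0 := by
            rw [← Fin.succAbove_lt_succAbove_iff (p := h), he]
            exact hr
          have h2 := hmin (σ c) hlt
          have h3 : (σ c).rev = c := σ.injective h2
          have h4 : σ c = c.rev := by rw [← h3, Fin.rev_rev]; exact h2
          rw [Fin.revPerm_apply, ← h4]
          exact he
        · intro he
          rw [Fin.revPerm_apply] at he
          have hlt : c.rev < i0 := by
            rw [← Fin.succAbove_lt_succAbove_iff (p := h), he]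
            exact hr
          have h2 := hmin c.rev hlt
          rw [Fin.rev_rev] at h2
          rw [h2]
          exact he
      simp only [key]
    · simp only at hreq hc
      subst hreq
      rw [if_neg, if_neg]
      · intro he
        have h1 : Fin.revPerm c = i0 := Fin.succAbove_right_injective he
        rw [Fin.revPerm_apply] at h1
        have h2 : c = i0.rev := by rw [← h1, Fin.rev_rev]
        rw [h2] at hc
        exact absurd (hc.trans hj0lt) (lt_irrefl _)
      · intro he
        have h1 : σ c = i0 := Fin.succAbove_right_injective he
        have h2 : c = j0 := by rw [hj0def, ← h1, Equiv.symm_apply_apply]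
        exact absurd h2 (ne_of_lt hc)

/-- Proposition 7.2 (second formula): for `2 ≤ h ≤ n+1` (here `h : Fin (n+1)` is the
`0`-indexed row, so the hypothesis reads `1 ≤ h`), the grevlex leading monomial of
`F_h = det W^h` is `y_h = Π_{i=1}^{h-1} w_{i,n+1-i} · Π_{i=h+1}^{n+1} w_{i,n+2-i}`.
In `0`-indexed form, the variable in column `j` of this monomial sits in row `n-j` when
`j < n - h` and in row `n-1-j` otherwise. -/
theorem leadingMonomial_Fh (k : Type*) [Field k] (hn : 2 ≤ n)
    (h : Fin (n + 1)) (hh : 1 ≤ (h : ℕ)) :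
    let F : MvPolynomial (Fin (n + 1) × Fin n) k :=
      Matrix.det ((Matrix.of fun (i : Fin (n + 1)) (j : Fin n) => X (i, j)).submatrix
        h.succAbove id)
    let m : Fin (n + 1) × Fin n →₀ ℕ :=
      ∑ j : Fin n,
        Finsupp.single
          ((if (j : ℕ) < n - (h : ℕ) then (⟨n - (j : ℕ), by omega⟩ : Fin (n + 1))
            else ⟨n - 1 - (j : ℕ), by omega⟩), j) 1
    m ∈ F.support ∧ ∀ d ∈ F.support, d ≠ m → GrevlexLT d m := by
  intro F m
  have hh' : (h : ℕ) < n + 1 := h.isLt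
  have hF : F = Matrix.det ((Matrix.of fun (i : Fin (n + 1)) (j : Fin n) =>
      (X (i, j) : MvPolynomial (Fin (n + 1) × Fin n) k)).submatrix h.succAbove id) := rfl
  have hm : m = mPerm h Fin.revPerm := by
    show (∑ j : Fin n, Finsupp.single _ 1) = _
    rw [mPerm]
    refine Finset.sum_congr rfl fun j _ => ?_
    congr 2
    have hj : (j : ℕ) < n := j.isLt
    rcases lt_or_ge (Fin.castSucc (Fin.revPerm j)) h with hcase | hcase
    · rw [Fin.succAbove_of_castSucc_lt _ _ hcase]
      rw [Fin.lt_def, Fin.coe_castSucc, Fin.revPerm_apply, Fin.val_rev] at hcase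
      rw [if_neg (by omega)]
      ext
      simp only [Fin.coe_castSucc, Fin.revPerm_apply, Fin.val_rev]
      omega
    · rw [Fin.succAbove_of_le_castSucc _ _ hcase]
      rw [Fin.le_def, Fin.coe_castSucc, Fin.revPerm_apply, Fin.val_rev] at hcase
      rw [if_pos (by omega)]
      ext
      simp only [Fin.val_succ, Fin.revPerm_apply, Fin.val_rev]
      omega
  constructor
  · rw [MvPolynomial.mem_support_iff, hm, hF, coeff_det_mPerm]
    rcases Int.units_eq_one_or (Equiv.Perm.sign (Fin.revPerm : Equiv.Perm (Fin n))) with hs | hs <;>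
      simp [hs]
  · intro d hd hdm
    rw [MvPolynomial.mem_support_iff, hF] at hd
    have hexσ : ∃ σ : Equiv.Perm (Fin n), mPerm h σ = d := by
      by_contra hc
      push_neg at hc
      apply hd
      rw [coeff_det]
      exact Finset.sum_eq_zero fun σ _ => if_neg (hc σ)
    obtain ⟨σ, rfl⟩ := hexσ
    rw [hm]
    refine grevlex_lt h σ ?_
    intro he
    exact hdm (by rw [hm, he])

end NestedHilbertStmt13
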